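/- Let Δ ⊂ ℝⁿ be the union of the closures of finitely many pairwise disjoint open n-simplices, each of which has a vertex at a vertex of Δ and has all but at most one of its (n-1)-dimensional facets contained in ∂Δ. If some simplex Σ in the family has all of its facets contained in ∂Δ, then Σ_c = Δ and the family consists of exactly one simplex. -/

import Mathlib

/-- An open n-simplex with vertex data P and designated vertex index a. -/
def IsOpenSimplexWith {n : ℕ} (S : Set (Fin n → ℝ))
    (P : Fin (n + 1) → (Fin n → ℝ)) (a : Fin (n + 1)) : Prop :=
  AffineIndependent ℝ P ∧
    S = convexHull ℝ (Set.range P) \ convexHull ℝ (P '' {i | i ≠ a})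

open Set

/-- Each facet of a simplex lies in the zero set of the corresponding barycentric coordinate. -/
theorem AffineBasis.facet_subset_coord_zero {E : Type*} [NormedAddCommGroup E]
    [NormedSpace ℝ E] {ι : Type*} (b : AffineBasis ι ℝ E) (j : ι) :
    convexHull ℝ (⇑b '' {m | m ≠ j}) ⊆ {x | b.coord j x = 0} := by
  classical
  have hconv : Convex ℝ {x : E | b.coord j x = 0} := by
    have : {x : E | b.coord j x = 0} = (b.coord j) ⁻¹' {0} := rfl
    rw [this]
    exact (convex_singleton (0 : ℝ)).affine_preimage (b.coord j)
  refine convexHull_min ?_ hconv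
  rintro _ ⟨m, hm, rfl⟩
  simp only [mem_setOf_eq, b.coord_apply]
  simp [Ne.symm hm]

/-- The frontier of a full-dimensional simplex is contained in the union of its facets. -/
theorem AffineBasis.frontier_convexHull_subset {E : Type*} [NormedAddCommGroup E]
    [NormedSpace ℝ E] {ι : Type*} [Fintype ι] (b : AffineBasis ι ℝ E) :
    frontier (convexHull ℝ (range ⇑b)) ⊆ ⋃ j, convexHull ℝ (⇑b '' {m | m ≠ j}) := by
  classical
  intro x hx
  have hcl : IsClosed (convexHull ℝ (range ⇑b)) :=
    (Set.finite_range ⇑b).isClosed_convexHull (𝕜 := ℝ)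
  rw [frontier, hcl.closure_eq] at hx
  obtain ⟨hxm, hxi⟩ := hx
  rw [b.interior_convexHull] at hxi
  simp only [Set.mem_setOf_eq, not_forall, not_lt] at hxi
  obtain ⟨j, hj⟩ := hxi
  have h0 : ∀ m, 0 ≤ b.coord m x := by
    rw [b.convexHull_eq_nonneg_coord] at hxm; exact hxm
  have hj0 : b.coord j x = 0 := le_antisymm hj (h0 j)
  have hsum : ∑ m, b.coord m x = 1 := b.sum_coord_apply_eq_one x
  have hsum' : ∑ m ∈ Finset.univ.erase j, b.coord m x = 1 := by
    rw [Finset.sum_erase_eq_sub (Finset.mem_univ j), hsum, hj0, sub_zero]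
  have hx_eq : (Finset.univ.erase j).centerMass (fun m => b.coord m x) ⇑b = x := by
    rw [Finset.centerMass_subset ⇑b (Finset.subset_univ _)
      (fun m _ hm => by
        have : m = j := by simpa using hm
        rw [this]; exact hj0)]
    rw [← affineCombination_eq_centerMass hsum]
    exact b.affineCombination_coord_eq_self x
  refine mem_iUnion.2 ⟨j, ?_⟩
  rw [← hx_eq]
  refine Finset.centerMass_mem_convexHull _ (fun m _ => h0 m) ?_ ?_
  · rw [hsum']; exact zero_lt_one
  · intro m hm
    exact ⟨m, by simpa using (Finset.mem_erase.1 hm).1, rfl⟩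

theorem stmt_15 {n : ℕ} {ι : Type*} [Fintype ι] (Δ : Set (Fin n → ℝ))
    (hΔc : IsCompact Δ) (hΔconv : Convex ℝ Δ)
    (P : ι → Fin (n + 1) → (Fin n → ℝ)) (a : ι → Fin (n + 1))
    (S : ι → Set (Fin n → ℝ))
    (hS : ∀ i, IsOpenSimplexWith (S i) (P i) (a i))
    (hdisj : ∀ i j, i ≠ j → S i ∩ S j = ∅)
    (hcover : Δ = ⋃ i, convexHull ℝ (Set.range (P i)))
    (hvert : ∀ i, P i (a i) ∈ Set.extremePoints ℝ Δ)
    (hfacets : ∀ i, ∃ j₀ : Fin (n + 1), ∀ j, j ≠ j₀ →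
      convexHull ℝ (P i '' {m | m ≠ j}) ⊆ frontier Δ)
    (i₀ : ι)
    (hall : ∀ j, convexHull ℝ (P i₀ '' {m | m ≠ j}) ⊆ frontier Δ) :
    convexHull ℝ (Set.range (P i₀)) = Δ ∧ ∀ i, i = i₀ := by
  classical
  have hind : ∀ i, AffineIndependent ℝ (P i) := fun i => (hS i).1
  have htot : ∀ i, affineSpan ℝ (Set.range (P i)) = ⊤ := fun i =>
    (hind i).affineSpan_eq_top_iff_card_eq_finrank_add_one.2 (by
      simp [Module.finrank_fintype_fun_eq_card])
  let b : ι → AffineBasis (Fin (n + 1)) ℝ (Fin n → ℝ) := fun i => ⟨P i, hind i, htot i⟩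
  have hbP : ∀ i, ⇑(b i) = P i := fun _ => rfl
  have hsubΔ : ∀ i, convexHull ℝ (Set.range (P i)) ⊆ Δ := fun i => by
    rw [hcover]
    exact Set.subset_iUnion (fun i => convexHull ℝ (Set.range (P i))) i
  have hclosed : ∀ i, IsClosed (convexHull ℝ (Set.range (P i))) := fun i =>
    (Set.finite_range (P i)).isClosed_convexHull (𝕜 := ℝ)
  have hint : ∀ i, (interior (convexHull ℝ (Set.range (P i)))).Nonempty := fun i =>
    ⟨_, by rw [← hbP i]; exact (b i).centroid_mem_interior_convexHull⟩
  set Sc := convexHull ℝ (Set.range (P i₀)) with hSc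
  -- frontier of the simplex is inside frontier Δ
  have hfrS : frontier Sc ⊆ frontier Δ := by
    intro x hx
    have hx' : x ∈ ⋃ j, convexHull ℝ (⇑(b i₀) '' {m | m ≠ j}) :=
      (b i₀).frontier_convexHull_subset (by rw [hbP]; exact hx)
    rw [hbP] at hx'
    obtain ⟨_, ⟨j, rfl⟩, hj⟩ := hx'
    exact hall j hj
  -- interior Δ ⊆ interior Sc
  have hIntSsub : interior Sc ⊆ interior Δ := interior_mono (hsubΔ i₀)
  have hkey : interior Δ ⊆ interior Sc := by
    refine IsPreconnected.subset_left_of_subset_union isOpen_interior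
      (hclosed i₀).isOpen_compl ?_ ?_ ?_ hΔconv.interior.isPreconnected
    · exact disjoint_compl_right.mono_left interior_subset
    · intro x hx
      by_cases hxS2 : x ∈ Sc
      · left
        by_contra hni
        have hfr : x ∈ frontier Sc := ⟨subset_closure hxS2, hni⟩
        exact disjoint_interior_frontier.ne_of_mem hx (hfrS hfr) rfl
      · right; exact hxS2
    · obtain ⟨y, hy⟩ := hint i₀
      exact ⟨y, hIntSsub hy, hy⟩
  -- Δ ⊆ Sc
  have hDS : Δ ⊆ Sc := by
    intro x hx
    obtain ⟨y, hy⟩ := hint i₀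
    have hyΔ : y ∈ interior Δ := hIntSsub hy
    have hxcl : x ∈ closure Sc := by
      have htend : Filter.Tendsto (fun t : ℝ => x + t • (y - x)) (nhdsWithin 0 (Set.Ioi 0))
          (nhds x) := by
        have hc : Continuous (fun t : ℝ => x + t • (y - x)) := by fun_prop
        have := hc.tendsto 0
        simp only [zero_smul, add_zero] at this
        exact this.mono_left nhdsWithin_le_nhds
      refine mem_closure_of_tendsto htend ?_
      have hIoc : Set.Ioc (0 : ℝ) 1 ∈ nhdsWithin 0 (Set.Ioi 0) :=
        Ioc_mem_nhdsGT_of_mem ⟨le_refl 0, zero_lt_one⟩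
      filter_upwards [hIoc] with t ht
      exact interior_subset (hkey (hΔconv.add_smul_sub_mem_interior hx hyΔ ht))
    rwa [(hclosed i₀).closure_eq] at hxcl
  have hmain : Sc = Δ := Set.Subset.antisymm (hsubΔ i₀) hDS
  refine ⟨hmain, fun i => ?_⟩
  by_contra hne
  -- the centroid of simplex i lies in both S i and S i₀
  obtain ⟨x, hx⟩ := hint i
  have hxΔ : x ∈ interior Δ := interior_mono (hsubΔ i) hx
  have hxS2 : x ∈ interior Sc := hkey hxΔ
  have hcoordpos : ∀ (k : ι) (z : Fin n → ℝ), z ∈ interior (convexHull ℝ (Set.range (P k))) →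
      ∀ j, 0 < (b k).coord j z := by
    intro k z hz j
    have := (b k).interior_convexHull
    rw [hbP] at this
    rw [this] at hz
    exact hz j
  have hnotfacet : ∀ (k : ι) (z : Fin n → ℝ), z ∈ interior (convexHull ℝ (Set.range (P k))) →
      ∀ j, z ∉ convexHull ℝ (P k '' {m | m ≠ j}) := by
    intro k z hz j hmem
    have h0 : (b k).coord j z = 0 := by
      have := (b k).facet_subset_coord_zero j
      rw [hbP] at this
      exact this hmem
    exact absurd h0 (ne_of_gt (hcoordpos k z hz j))
  have hxSi : x ∈ S i := by
    rw [(hS i).2]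
    exact ⟨interior_subset hx, hnotfacet i x hx (a i)⟩
  have hxSi₀ : x ∈ S i₀ := by
    rw [(hS i₀).2]
    exact ⟨interior_subset hxS2, hnotfacet i₀ x hxS2 (a i₀)⟩
  have := hdisj i i₀ hne
  rw [Set.eq_empty_iff_forall_notMem] at this
  exact this x ⟨hxSi, hxSi₀⟩
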